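/- Fix N ≥ 1, parameters α : Fin N → ℂ, and C : (Fin N → ℕ) → ℂ satisfying the cyclic N-mode squeezing equations: for every i ∈ Fin N (with i+1 taken cyclically) and every occupation vector m : Fin N → ℕ, √(m i + 1) · C (m + eᵢ) equals αᵢ · √(m (i+1)) · C (m − e_{i+1}) when m (i+1) ≥ 1, and equals 0 when m (i+1) = 0, where eⱼ denotes the j-th standard unit vector. Then C (m) = 0 unless m (i) ≤ m (i+1) for every i ∈ Fin N (indices cyclic); consequently C is supported on constant occupation vectors, i.e. C (m) = 0 unless m 1 = m 2 = ⋯ = m N. -/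

import Mathlib

open Fin.NatCast in
lemma cyclic_mono_const {N : ℕ} [NeZero N] (m : Fin N → ℕ)
    (h : ∀ i : Fin N, m i ≤ m (i + 1)) : ∀ i j : Fin N, m i = m j := by
  have key : ∀ (k : ℕ) (i : Fin N), m i ≤ m (i + (k : Fin N)) := by
    intro k
    induction k with
    | zero => intro i; simp
    | succ k ih =>
      intro i
      have : m i ≤ m (i + (k : Fin N)) := ih i
      calc m i ≤ m (i + (k : Fin N)) := this
        _ ≤ m (i + (k : Fin N) + 1) := h _
        _ = m (i + ((k + 1 : ℕ) : Fin N)) := by push_cast; rw [add_assoc]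
  intro i j
  have h1 : m i ≤ m j := by
    have := key (j - i).val i
    rwa [Fin.cast_val_eq_self, add_sub_cancel] at this
  have h2 : m j ≤ m i := by
    have := key (i - j).val j
    rwa [Fin.cast_val_eq_self, add_sub_cancel] at this
  omega

/-- Support of a cyclic N-mode squeezed state: the cyclic coupling conditions
force `C m = 0` unless `m i ≤ m (i+1)` for every `i` (cyclically); consequently
`C` is supported on constant occupation vectors. -/
theorem cyclic_N_mode_support (N : ℕ) [NeZero N] (hN : 1 ≤ N) (α : Fin N → ℂ)
    (C : (Fin N → ℕ) → ℂ)
    (hrec : ∀ (i : Fin N) (m : Fin N → ℕ), 1 ≤ m (i + 1) →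
      (Real.sqrt (m i + 1) : ℂ) * C (m + Pi.single i 1) =
        α i * (Real.sqrt (m (i + 1)) : ℂ) * C (m - Pi.single (i + 1) 1))
    (hrec0 : ∀ (i : Fin N) (m : Fin N → ℕ), m (i + 1) = 0 →
      (Real.sqrt (m i + 1) : ℂ) * C (m + Pi.single i 1) = 0) :
    (∀ m : Fin N → ℕ, C m ≠ 0 → ∀ i : Fin N, m i ≤ m (i + 1)) ∧
    (∀ m : Fin N → ℕ, C m ≠ 0 → ∀ i j : Fin N, m i = m j) := by
  have H1 : ∀ m : Fin N → ℕ, C m ≠ 0 → ∀ i : Fin N, m i ≤ m (i + 1) := by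
    intro m hm i
    by_contra hlt
    push_neg at hlt
    by_cases hii : i + 1 = i
    · rw [hii] at hlt; omega
    apply hm
    have key : ∀ (k : ℕ) (m : Fin N → ℕ), m (i + 1) = k → m (i + 1) < m i → C m = 0 := by
      intro k
      induction k with
      | zero =>
        intro m hk hlt
        set m' : Fin N → ℕ := m - Pi.single i 1 with hm'
        have hmi : 1 ≤ m i := by omega
        have hsum : m' + Pi.single i 1 = m := by
          funext j
          by_cases hj : j = i
          · subst hj
            simp [hm', Pi.sub_apply, Pi.single_eq_same]
            omega
          · simp [hm', Pi.sub_apply, Pi.single_eq_of_ne hj]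
        have e0 : m' (i + 1) = 0 := by
          simp [hm', Pi.sub_apply, Pi.single_eq_of_ne hii, hk]
        have h := hrec0 i m' e0
        rw [hsum] at h
        have hne : (Real.sqrt (m' i + 1) : ℂ) ≠ 0 := by
          refine Complex.ofReal_ne_zero.mpr (ne_of_gt (Real.sqrt_pos.mpr ?_))
          positivity
        exact (mul_eq_zero.mp h).resolve_left hne
      | succ k ih =>
        intro m hk hlt
        set m' : Fin N → ℕ := m - Pi.single i 1 with hm'
        have hmi : 1 ≤ m i := by omega
        have hsum : m' + Pi.single i 1 = m := by
          funext j
          by_cases hj : j = i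
          · subst hj
            simp [hm', Pi.sub_apply, Pi.single_eq_same]
            omega
          · simp [hm', Pi.sub_apply, Pi.single_eq_of_ne hj]
        have e1 : m' (i + 1) = k + 1 := by
          simp [hm', Pi.sub_apply, Pi.single_eq_of_ne hii, hk]
        have h := hrec i m' (by omega)
        rw [hsum] at h
        have hv1 : ((m' - Pi.single (i + 1) 1 : Fin N → ℕ)) (i + 1) = k := by
          simp [Pi.sub_apply, Pi.single_eq_same, e1]
        have hv2 : ((m' - Pi.single (i + 1) 1 : Fin N → ℕ)) i = m i - 1 := by
          simp [Pi.sub_apply, Pi.single_eq_of_ne (Ne.symm hii), hm',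
            Pi.single_eq_same]
        have hz : C (m' - Pi.single (i + 1) 1) = 0 :=
          ih (m' - Pi.single (i + 1) 1) hv1 (by omega)
        rw [hz, mul_zero] at h
        have hne : (Real.sqrt (m' i + 1) : ℂ) ≠ 0 := by
          refine Complex.ofReal_ne_zero.mpr (ne_of_gt (Real.sqrt_pos.mpr ?_))
          positivity
        exact (mul_eq_zero.mp h).resolve_left hne
    exact key (m (i + 1)) m rfl hlt
  refine ⟨H1, fun m hm => cyclic_mono_const m (H1 m hm)⟩
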